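/- Let N ≥ 2 be an integer, let β ∈ ℝ satisfy −1/(4(N−1)) ≤ β ≤ 0, let c₂ > 0, c₄ > 0, and let R > 0. Then there exists a continuous function h : ℝ → ℝ such that h(r) ≥ c₄ + c₂·r² for every r ∈ [0, R], and h(r) = c₄ + c₂·r² + ∫_0^r G(τ, r)·h(τ)^(−1/3) dτ for every r ∈ [0, R], where G is defined as in the context (extended by G(0,r) = 0). -/

import Mathlib

open intervalIntegral

/-- `G₁(τ,s) = ∫_τ^s τ^{N−1}/u^{N−1} du`. -/
noncomputable def G₁ (N : ℕ) (τ s : ℝ) : ℝ :=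
  ∫ u in τ..s, (τ : ℝ) ^ (N - 1) / u ^ (N - 1)

/-- `H₁(τ,s) = τ (s^N − τ^N)/N`. -/
noncomputable def H₁ (N : ℕ) (τ s : ℝ) : ℝ := τ * (s ^ N - τ ^ N) / N

/-- `G₂(τ,s) = ∫_τ^s u^{N−1} G₁(τ,u) du`. -/
noncomputable def G₂ (N : ℕ) (τ s : ℝ) : ℝ :=
  ∫ u in τ..s, u ^ (N - 1) * G₁ N τ u

/-- `G(τ,r) = −β ∫_τ^r H₁(τ,s) s^{1−N} ds
      + ((4(N−1)β+1)/4) ∫_τ^r G₂(τ,s) s^{1−N} ds`. -/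
noncomputable def G (N : ℕ) (β τ r : ℝ) : ℝ :=
  -β * (∫ s in τ..r, H₁ N τ s * s ^ ((1 : ℤ) - N))
    + ((4 * ((N : ℝ) - 1) * β + 1) / 4)
      * ∫ s in τ..r, G₂ N τ s * s ^ ((1 : ℤ) - N)

/-- The kernel `G` extended by `G(0,r) = 0`. -/
noncomputable def Gext (N : ℕ) (β τ r : ℝ) : ℝ :=
  if τ = 0 then 0 else G N β τ r

namespace S13

open Set MeasureTheory

noncomputable def F1 (N : ℕ) (τ u : ℝ) : ℝ := τ ^ (N - 1) / (max u τ) ^ (N - 1)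

noncomputable def g1 (N : ℕ) (τ s : ℝ) : ℝ := ∫ u in τ..s, F1 N τ u

noncomputable def F2 (N : ℕ) (τ u : ℝ) : ℝ := u ^ (N - 1) * g1 N τ u

noncomputable def g2 (N : ℕ) (τ s : ℝ) : ℝ := ∫ u in τ..s, F2 N τ u

noncomputable def F3 (N : ℕ) (τ s : ℝ) : ℝ := H₁ N τ s * (max s τ) ^ ((1 : ℤ) - N)

noncomputable def F4 (N : ℕ) (τ s : ℝ) : ℝ := g2 N τ s * (max s τ) ^ ((1 : ℤ) - N)

noncomputable def Gg (N : ℕ) (β τ r : ℝ) : ℝ :=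
  -β * (∫ s in τ..r, F3 N τ s)
    + ((4 * ((N : ℝ) - 1) * β + 1) / 4) * ∫ s in τ..r, F4 N τ s

variable {N : ℕ} {τ s u r : ℝ}

lemma max_pos (hτ : 0 < τ) (u : ℝ) : 0 < max u τ := lt_of_lt_of_le hτ (le_max_right u τ)

lemma cont_F1 : Continuous fun p : Ioi (0:ℝ) × ℝ => F1 N p.1 p.2 := by
  apply Continuous.div (by fun_prop) (by fun_prop)
  intro p
  exact pow_ne_zero _ (ne_of_gt (max_pos p.1.2 _))

lemma cont_F1' (hτ : 0 < τ) : Continuous (F1 N τ) := by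
  apply Continuous.div continuous_const (by fun_prop)
  intro u
  exact pow_ne_zero _ (ne_of_gt (max_pos hτ _))

lemma F1_nonneg (hτ : 0 < τ) (u : ℝ) : 0 ≤ F1 N τ u :=
  div_nonneg (pow_nonneg hτ.le _) (pow_nonneg (max_pos hτ u).le _)

lemma F1_le_one (hτ : 0 < τ) (u : ℝ) : F1 N τ u ≤ 1 := by
  rw [F1, div_le_one (pow_pos (max_pos hτ u) _)]
  exact pow_le_pow_left₀ hτ.le (le_max_right u τ) _

lemma cont_g1 : Continuous fun p : Ioi (0:ℝ) × ℝ => g1 N p.1 p.2 := by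
  have hF : Continuous (Function.uncurry fun (p : Ioi (0:ℝ) × ℝ) (u : ℝ) => F1 N (p.1 : ℝ) u) := by
    exact cont_F1.comp (show Continuous fun q : (Ioi (0:ℝ) × ℝ) × ℝ => (q.1.1, q.2) by fun_prop)
  have h1 : Continuous fun p : Ioi (0:ℝ) × ℝ =>
      ∫ u in (0:ℝ)..p.2, F1 N (p.1 : ℝ) u :=
    continuous_parametric_intervalIntegral_of_continuous (μ := MeasureTheory.volume) hF
      continuous_snd
  have h2 : Continuous fun p : Ioi (0:ℝ) × ℝ =>
      ∫ u in (0:ℝ)..(p.1 : ℝ), F1 N (p.1 : ℝ) u :=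
    continuous_parametric_intervalIntegral_of_continuous (μ := MeasureTheory.volume) hF
      (by fun_prop)
  apply (h1.sub h2).congr
  intro p
  exact integral_interval_sub_left ((cont_F1' p.1.2).intervalIntegrable _ _)
    ((cont_F1' p.1.2).intervalIntegrable _ _)

lemma cont_slice {f : Ioi (0:ℝ) × ℝ → ℝ} (hf : Continuous f) (hτ : 0 < τ) :
    Continuous fun u : ℝ => f (⟨τ, hτ⟩, u) := by
  have h : Continuous fun u : ℝ => ((⟨τ, hτ⟩ : Ioi (0:ℝ)), u) :=
    Continuous.prodMk continuous_const continuous_id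
  exact hf.comp h

lemma cont_g1' (hτ : 0 < τ) : Continuous (g1 N τ) :=
  cont_slice (cont_g1 (N := N)) hτ

lemma g1_nonneg (hτ : 0 < τ) (hs : τ ≤ s) : 0 ≤ g1 N τ s :=
  integral_nonneg hs fun u _ => F1_nonneg hτ u

lemma g1_le (hτ : 0 < τ) (hs : τ ≤ s) : g1 N τ s ≤ s - τ := by
  have h := integral_mono_on hs ((cont_F1' (N := N) hτ).intervalIntegrable (μ := MeasureTheory.volume) _ _)
    intervalIntegrable_const (fun u _ => F1_le_one hτ u)
  simpa [g1] using h

lemma g1_eq (hτ : 0 < τ) (hs : τ ≤ s) : G₁ N τ s = g1 N τ s := by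
  apply integral_congr
  intro u hu
  rw [uIcc_of_le hs] at hu
  simp only [F1, max_eq_left hu.1]

lemma cont_F2 : Continuous fun p : Ioi (0:ℝ) × ℝ => F2 N p.1 p.2 := by
  unfold F2
  exact (by fun_prop : Continuous fun p : Ioi (0:ℝ) × ℝ => p.2 ^ (N - 1)).mul cont_g1

lemma cont_F2' (hτ : 0 < τ) : Continuous (F2 N τ) :=
  cont_slice (cont_F2 (N := N)) hτ

lemma F2_nonneg (hτ : 0 < τ) (hu : τ ≤ u) : 0 ≤ F2 N τ u :=
  mul_nonneg (pow_nonneg (hτ.le.trans hu) _) (g1_nonneg hτ hu)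

lemma F2_le (hN : 1 ≤ N) (hτ : 0 < τ) (hu : τ ≤ u) (hus : u ≤ s) : F2 N τ u ≤ s ^ N := by
  have h0u : 0 ≤ u := hτ.le.trans hu
  have h1 : u ^ (N - 1) ≤ s ^ (N - 1) := pow_le_pow_left₀ h0u hus _
  have h2 : g1 N τ u ≤ s := (g1_le hτ hu).trans (by linarith [hτ.le])
  calc F2 N τ u ≤ s ^ (N - 1) * s :=
        mul_le_mul h1 h2 (g1_nonneg hτ hu) (pow_nonneg (h0u.trans hus) _)
    _ = s ^ N := by rw [← pow_succ, Nat.sub_add_cancel hN]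

lemma cont_g2 : Continuous fun p : Ioi (0:ℝ) × ℝ => g2 N p.1 p.2 := by
  have hF : Continuous (Function.uncurry fun (p : Ioi (0:ℝ) × ℝ) (u : ℝ) => F2 N (p.1 : ℝ) u) := by
    exact cont_F2.comp (show Continuous fun q : (Ioi (0:ℝ) × ℝ) × ℝ => (q.1.1, q.2) by fun_prop)
  have h1 : Continuous fun p : Ioi (0:ℝ) × ℝ =>
      ∫ u in (0:ℝ)..p.2, F2 N (p.1 : ℝ) u :=
    continuous_parametric_intervalIntegral_of_continuous (μ := MeasureTheory.volume) hF
      continuous_snd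
  have h2 : Continuous fun p : Ioi (0:ℝ) × ℝ =>
      ∫ u in (0:ℝ)..(p.1 : ℝ), F2 N (p.1 : ℝ) u :=
    continuous_parametric_intervalIntegral_of_continuous (μ := MeasureTheory.volume) hF
      (by fun_prop)
  apply (h1.sub h2).congr
  intro p
  exact integral_interval_sub_left ((cont_F2' p.1.2).intervalIntegrable _ _)
    ((cont_F2' p.1.2).intervalIntegrable _ _)

lemma g2_nonneg (hτ : 0 < τ) (hs : τ ≤ s) : 0 ≤ g2 N τ s :=
  integral_nonneg hs fun u hu => F2_nonneg hτ hu.1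

lemma g2_le (hN : 1 ≤ N) (hτ : 0 < τ) (hs : τ ≤ s) : g2 N τ s ≤ s ^ (N + 1) := by
  have h0s : 0 ≤ s := hτ.le.trans hs
  have h := integral_mono_on hs
    ((cont_F2' (N := N) hτ).intervalIntegrable (μ := MeasureTheory.volume) _ _)
    intervalIntegrable_const (g := fun _ => s ^ N) (fun u hu => F2_le hN hτ hu.1 hu.2)
  simp only [intervalIntegral.integral_const, smul_eq_mul] at h
  calc g2 N τ s ≤ (s - τ) * s ^ N := h
    _ ≤ s * s ^ N := by
        apply mul_le_mul_of_nonneg_right (by linarith) (pow_nonneg h0s _)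
    _ = s ^ (N + 1) := by rw [pow_succ]; ring

lemma g2_eq (hτ : 0 < τ) (hs : τ ≤ s) : G₂ N τ s = g2 N τ s := by
  apply integral_congr
  intro u hu
  rw [uIcc_of_le hs] at hu
  show u ^ (N - 1) * G₁ N τ u = F2 N τ u
  rw [g1_eq hτ hu.1, F2]

lemma cont_F3 : Continuous fun p : Ioi (0:ℝ) × ℝ => F3 N p.1 p.2 := by
  unfold F3 H₁
  apply Continuous.mul (by fun_prop)
  apply Continuous.zpow₀ (by fun_prop : Continuous fun p : Ioi (0:ℝ) × ℝ => max p.2 (p.1 : ℝ))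
  intro p
  exact Or.inl (ne_of_gt (max_pos p.1.2 _))

lemma cont_F4 : Continuous fun p : Ioi (0:ℝ) × ℝ => F4 N p.1 p.2 := by
  unfold F4
  apply Continuous.mul cont_g2
  apply Continuous.zpow₀ (by fun_prop : Continuous fun p : Ioi (0:ℝ) × ℝ => max p.2 (p.1 : ℝ))
  intro p
  exact Or.inl (ne_of_gt (max_pos p.1.2 _))

lemma cont_F3' (hτ : 0 < τ) : Continuous (F3 N τ) := cont_slice (cont_F3 (N := N)) hτ

lemma cont_F4' (hτ : 0 < τ) : Continuous (F4 N τ) := cont_slice (cont_F4 (N := N)) hτ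

lemma F3_nonneg (hτ : 0 < τ) (hs : τ ≤ s) : 0 ≤ F3 N τ s := by
  have h0s : 0 < s := hτ.trans_le hs
  apply mul_nonneg
  · apply div_nonneg (mul_nonneg hτ.le (sub_nonneg.2 (pow_le_pow_left₀ hτ.le hs _))) (Nat.cast_nonneg N)
  · exact zpow_nonneg (le_trans hτ.le (le_max_right s τ)) _

lemma F3_le (hN : 2 ≤ N) (hτ : 0 < τ) (hs : τ ≤ s) : F3 N τ s ≤ s ^ 2 := by
  have h0s : 0 < s := hτ.trans_le hs
  have hN1 : (1:ℝ) ≤ N := by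
    have : (2:ℝ) ≤ N := by exact_mod_cast hN
    linarith
  have hmax : max s τ = s := max_eq_left hs
  have hz : (s:ℝ) ^ ((1 : ℤ) - N) = s / s ^ N := by
    rw [zpow_sub₀ h0s.ne', zpow_one, zpow_natCast]
  have hpow : 0 < s ^ N := pow_pos h0s N
  rw [F3, hmax, hz, H₁]
  have step1 : τ * (s ^ N - τ ^ N) / N * (s / s ^ N) ≤ τ * s ^ N / N * (s / s ^ N) := by
    have hNpos : (0:ℝ) < N := by
      have : (2:ℝ) ≤ N := by exact_mod_cast hN
      linarith
    apply mul_le_mul_of_nonneg_right ?_ (div_nonneg h0s.le hpow.le)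
    apply div_le_div_of_nonneg_right ?_ hNpos.le
    nlinarith [pow_nonneg hτ.le N]
  have step2 : τ * s ^ N / N * (s / s ^ N) = τ * s / N := by
    field_simp
  calc τ * (s ^ N - τ ^ N) / N * (s / s ^ N) ≤ τ * s ^ N / N * (s / s ^ N) := step1
    _ = τ * s / N := step2
    _ ≤ τ * s := div_le_self (mul_nonneg hτ.le h0s.le) hN1
    _ ≤ s ^ 2 := by nlinarith

lemma F4_nonneg (hτ : 0 < τ) (hs : τ ≤ s) : 0 ≤ F4 N τ s :=
  mul_nonneg (g2_nonneg hτ hs) (zpow_nonneg (le_trans hτ.le (le_max_right s τ)) _)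

lemma F4_le (hN : 2 ≤ N) (hτ : 0 < τ) (hs : τ ≤ s) : F4 N τ s ≤ s ^ 2 := by
  have h0s : 0 < s := hτ.trans_le hs
  have hmax : max s τ = s := max_eq_left hs
  have hzn : (0:ℝ) ≤ s ^ ((1 : ℤ) - N) := zpow_nonneg h0s.le _
  have key : (s:ℝ) ^ (N + 1) * s ^ ((1 : ℤ) - N) = s ^ 2 := by
    rw [← zpow_natCast s (N + 1), ← zpow_add₀ h0s.ne']
    have : ((N + 1 : ℕ) : ℤ) + (1 - (N : ℤ)) = 2 := by push_cast; ring
    rw [this, show (2:ℤ) = ((2:ℕ):ℤ) from rfl, zpow_natCast]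
  rw [F4, hmax]
  calc g2 N τ s * s ^ ((1 : ℤ) - N) ≤ s ^ (N + 1) * s ^ ((1 : ℤ) - N) :=
        mul_le_mul_of_nonneg_right (g2_le (by omega) hτ hs) hzn
    _ = s ^ 2 := key

set_option maxHeartbeats 1000000 in
lemma cont_Gg {β : ℝ} : Continuous fun p : Ioi (0:ℝ) × ℝ => Gg N β p.1 p.2 := by
  have mk3 : Continuous (Function.uncurry fun (p : Ioi (0:ℝ) × ℝ) (u : ℝ) => F3 N (p.1 : ℝ) u) := by
    have h := (cont_F3 (N := N)).comp
      (show Continuous fun q : (Ioi (0:ℝ) × ℝ) × ℝ => (q.1.1, q.2) by fun_prop)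
    exact h.congr fun q => rfl
  have mk4 : Continuous (Function.uncurry fun (p : Ioi (0:ℝ) × ℝ) (u : ℝ) => F4 N (p.1 : ℝ) u) := by
    have h := (cont_F4 (N := N)).comp
      (show Continuous fun q : (Ioi (0:ℝ) × ℝ) × ℝ => (q.1.1, q.2) by fun_prop)
    exact h.congr fun q => rfl
  have h3 : Continuous fun p : Ioi (0:ℝ) × ℝ => ∫ u in (p.1 : ℝ)..p.2, F3 N (p.1 : ℝ) u := by
    have h1 : Continuous fun p : Ioi (0:ℝ) × ℝ => ∫ u in (0:ℝ)..p.2, F3 N (p.1 : ℝ) u :=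
      continuous_parametric_intervalIntegral_of_continuous (μ := MeasureTheory.volume) mk3
        continuous_snd
    have h2 : Continuous fun p : Ioi (0:ℝ) × ℝ => ∫ u in (0:ℝ)..(p.1 : ℝ), F3 N (p.1 : ℝ) u :=
      continuous_parametric_intervalIntegral_of_continuous (μ := MeasureTheory.volume) mk3
        (by fun_prop)
    apply (h1.sub h2).congr
    intro p
    exact integral_interval_sub_left ((cont_F3' p.1.2).intervalIntegrable _ _)
      ((cont_F3' p.1.2).intervalIntegrable _ _)
  have h4 : Continuous fun p : Ioi (0:ℝ) × ℝ => ∫ u in (p.1 : ℝ)..p.2, F4 N (p.1 : ℝ) u := by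
    have h1 : Continuous fun p : Ioi (0:ℝ) × ℝ => ∫ u in (0:ℝ)..p.2, F4 N (p.1 : ℝ) u :=
      continuous_parametric_intervalIntegral_of_continuous (μ := MeasureTheory.volume) mk4
        continuous_snd
    have h2 : Continuous fun p : Ioi (0:ℝ) × ℝ => ∫ u in (0:ℝ)..(p.1 : ℝ), F4 N (p.1 : ℝ) u :=
      continuous_parametric_intervalIntegral_of_continuous (μ := MeasureTheory.volume) mk4
        (by fun_prop)
    apply (h1.sub h2).congr
    intro p
    exact integral_interval_sub_left ((cont_F4' p.1.2).intervalIntegrable _ _)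
      ((cont_F4' p.1.2).intervalIntegrable _ _)
  unfold Gg
  exact ((continuous_const.mul h3)).add (continuous_const.mul h4)

lemma Gg_eq {β : ℝ} (hτ : 0 < τ) (hr : τ ≤ r) : G N β τ r = Gg N β τ r := by
  unfold G Gg
  congr 1
  · congr 1
    apply integral_congr
    intro x hx
    rw [uIcc_of_le hr] at hx
    rw [F3, max_eq_left hx.1]
  · congr 1
    apply integral_congr
    intro x hx
    rw [uIcc_of_le hr] at hx
    show G₂ N τ x * x ^ ((1 : ℤ) - N) = F4 N τ x
    rw [F4, max_eq_left hx.1, g2_eq hτ hx.1]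

noncomputable def CM (N : ℕ) (β R : ℝ) : ℝ :=
  (-β + (4 * ((N : ℝ) - 1) * β + 1) / 4) * R ^ 2

variable {β R r₁ r₂ : ℝ}

lemma CM_nonneg (hb1 : 0 ≤ -β) (hb2 : 0 ≤ (4 * ((N : ℝ) - 1) * β + 1) / 4) :
    0 ≤ CM N β R :=
  mul_nonneg (add_nonneg hb1 hb2) (sq_nonneg R)

lemma Gext_eq_Gg (hτ : 0 < τ) (hτr : τ ≤ r) : Gext N β τ r = Gg N β τ r := by
  rw [Gext, if_neg (ne_of_gt hτ), Gg_eq hτ hτr]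

lemma integral_F3_bounds (hN : 2 ≤ N) (hτ : 0 < τ) (h1 : τ ≤ r₁) (h12 : r₁ ≤ r₂) (hR2 : r₂ ≤ R) :
    0 ≤ (∫ s in r₁..r₂, F3 N τ s) ∧ (∫ s in r₁..r₂, F3 N τ s) ≤ R ^ 2 * (r₂ - r₁) := by
  have h0R : 0 ≤ R := (hτ.le.trans (h1.trans h12)).trans hR2
  constructor
  · exact integral_nonneg h12 fun s hs => F3_nonneg hτ (h1.trans hs.1)
  · have h := integral_mono_on h12
      ((cont_F3' (N := N) hτ).intervalIntegrable (μ := MeasureTheory.volume) _ _)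
      intervalIntegrable_const (g := fun _ => R ^ 2)
      (fun s hs => le_trans (F3_le hN hτ (h1.trans hs.1))
        (pow_le_pow_left₀ (hτ.le.trans (h1.trans hs.1)) (hs.2.trans hR2) 2))
    simpa [mul_comm] using h

lemma integral_F4_bounds (hN : 2 ≤ N) (hτ : 0 < τ) (h1 : τ ≤ r₁) (h12 : r₁ ≤ r₂) (hR2 : r₂ ≤ R) :
    0 ≤ (∫ s in r₁..r₂, F4 N τ s) ∧ (∫ s in r₁..r₂, F4 N τ s) ≤ R ^ 2 * (r₂ - r₁) := by
  have h0R : 0 ≤ R := (hτ.le.trans (h1.trans h12)).trans hR2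
  constructor
  · exact integral_nonneg h12 fun s hs => F4_nonneg hτ (h1.trans hs.1)
  · have h := integral_mono_on h12
      ((cont_F4' (N := N) hτ).intervalIntegrable (μ := MeasureTheory.volume) _ _)
      intervalIntegrable_const (g := fun _ => R ^ 2)
      (fun s hs => le_trans (F4_le hN hτ (h1.trans hs.1))
        (pow_le_pow_left₀ (hτ.le.trans (h1.trans hs.1)) (hs.2.trans hR2) 2))
    simpa [mul_comm] using h

lemma Gg_bounds (hN : 2 ≤ N) (hb1 : 0 ≤ -β) (hb2 : 0 ≤ (4 * ((N : ℝ) - 1) * β + 1) / 4)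
    (hτ : 0 < τ) (hτr : τ ≤ r) (hrR : r ≤ R) :
    0 ≤ Gg N β τ r ∧ Gg N β τ r ≤ CM N β R * (r - τ) := by
  obtain ⟨h3l, h3u⟩ := integral_F3_bounds hN hτ le_rfl hτr hrR
  obtain ⟨h4l, h4u⟩ := integral_F4_bounds hN hτ le_rfl hτr hrR
  constructor
  · exact add_nonneg (mul_nonneg hb1 h3l) (mul_nonneg hb2 h4l)
  · have e : CM N β R * (r - τ) = -β * (R ^ 2 * (r - τ))
        + (4 * ((N : ℝ) - 1) * β + 1) / 4 * (R ^ 2 * (r - τ)) := by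
      rw [CM]; ring
    rw [Gg, e]
    exact add_le_add (mul_le_mul_of_nonneg_left h3u hb1) (mul_le_mul_of_nonneg_left h4u hb2)

lemma Gext_nonneg (hN : 2 ≤ N) (hb1 : 0 ≤ -β) (hb2 : 0 ≤ (4 * ((N : ℝ) - 1) * β + 1) / 4)
    (hτ0 : 0 ≤ τ) (hτr : τ ≤ r) (hrR : r ≤ R) : 0 ≤ Gext N β τ r := by
  rcases eq_or_lt_of_le hτ0 with h | h
  · rw [Gext, if_pos h.symm]
  · rw [Gext_eq_Gg h hτr]
    exact (Gg_bounds hN hb1 hb2 h hτr hrR).1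

lemma Gext_le (hN : 2 ≤ N) (hb1 : 0 ≤ -β) (hb2 : 0 ≤ (4 * ((N : ℝ) - 1) * β + 1) / 4)
    (hτ0 : 0 ≤ τ) (hτr : τ ≤ r) (hrR : r ≤ R) : Gext N β τ r ≤ CM N β R * (r - τ) := by
  rcases eq_or_lt_of_le hτ0 with h | h
  · rw [Gext, if_pos h.symm]
    exact mul_nonneg (CM_nonneg hb1 hb2) (by linarith)
  · rw [Gext_eq_Gg h hτr]
    exact (Gg_bounds hN hb1 hb2 h hτr hrR).2

lemma Gext_diff_abs (hN : 2 ≤ N) (hb1 : 0 ≤ -β) (hb2 : 0 ≤ (4 * ((N : ℝ) - 1) * β + 1) / 4)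
    (hτ0 : 0 ≤ τ) (h1 : τ ≤ r₁) (h12 : r₁ ≤ r₂) (hR2 : r₂ ≤ R) :
    |Gext N β τ r₂ - Gext N β τ r₁| ≤ CM N β R * (r₂ - r₁) := by
  rcases eq_or_lt_of_le hτ0 with h | h
  · rw [Gext, Gext, if_pos h.symm, if_pos h.symm]
    simp only [sub_zero, abs_zero]
    exact mul_nonneg (CM_nonneg hb1 hb2) (by linarith)
  · have e : Gext N β τ r₂ - Gext N β τ r₁
        = -β * (∫ s in r₁..r₂, F3 N τ s)
          + (4 * ((N : ℝ) - 1) * β + 1) / 4 * ∫ s in r₁..r₂, F4 N τ s := by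
      rw [Gext_eq_Gg h (h1.trans h12), Gext_eq_Gg h h1, Gg, Gg]
      have e3 : (∫ s in τ..r₂, F3 N τ s) - (∫ s in τ..r₁, F3 N τ s)
          = ∫ s in r₁..r₂, F3 N τ s :=
        integral_interval_sub_left ((cont_F3' h).intervalIntegrable _ _)
          ((cont_F3' h).intervalIntegrable _ _)
      have e4 : (∫ s in τ..r₂, F4 N τ s) - (∫ s in τ..r₁, F4 N τ s)
          = ∫ s in r₁..r₂, F4 N τ s :=
        integral_interval_sub_left ((cont_F4' h).intervalIntegrable _ _)
          ((cont_F4' h).intervalIntegrable _ _)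
      rw [← e3, ← e4]; ring
    obtain ⟨h3l, h3u⟩ := integral_F3_bounds hN h h1 h12 hR2
    obtain ⟨h4l, h4u⟩ := integral_F4_bounds hN h h1 h12 hR2
    rw [e, abs_of_nonneg (add_nonneg (mul_nonneg hb1 h3l) (mul_nonneg hb2 h4l))]
    have e2 : CM N β R * (r₂ - r₁) = -β * (R ^ 2 * (r₂ - r₁))
        + (4 * ((N : ℝ) - 1) * β + 1) / 4 * (R ^ 2 * (r₂ - r₁)) := by
      rw [CM]; ring
    rw [e2]
    exact add_le_add (mul_le_mul_of_nonneg_left h3u hb1) (mul_le_mul_of_nonneg_left h4u hb2)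

lemma Gext_contOn : ContinuousOn (fun τ => Gext N β τ r) (Ioc 0 r) := by
  have h : ContinuousOn (fun τ => Gg N β τ r) (Ioi (0:ℝ)) := by
    rw [continuousOn_iff_continuous_restrict]
    have hc : Continuous fun x : Ioi (0:ℝ) => ((x, r) : Ioi (0:ℝ) × ℝ) :=
      Continuous.prodMk continuous_id continuous_const
    exact (cont_Gg.comp hc).congr fun x => rfl
  apply ContinuousOn.congr (h.mono Ioc_subset_Ioi_self)
  intro τ hτ
  exact Gext_eq_Gg hτ.1 hτ.2

lemma K_int {ψ : ℝ → ℝ} {B : ℝ} (hN : 2 ≤ N) (hb1 : 0 ≤ -β)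
    (hb2 : 0 ≤ (4 * ((N : ℝ) - 1) * β + 1) / 4)
    (hψc : Continuous ψ) (hψb : ∀ t, |ψ t| ≤ B) (hr : 0 ≤ r) (hrR : r ≤ R) :
    IntervalIntegrable (fun τ => Gext N β τ r * ψ τ) MeasureTheory.volume 0 r := by
  rw [intervalIntegrable_iff_integrableOn_Ioc_of_le hr]
  have h0R : 0 ≤ R := hr.trans hrR
  have hB : 0 ≤ B := (abs_nonneg _).trans (hψb 0)
  refine ⟨((Gext_contOn.mul hψc.continuousOn).aestronglyMeasurable measurableSet_Ioc), ?_⟩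
  apply MeasureTheory.HasFiniteIntegral.restrict_of_bounded (C := CM N β R * R * B)
    measure_Ioc_lt_top
  filter_upwards [MeasureTheory.ae_restrict_mem measurableSet_Ioc] with τ hτ
  have h1 : |Gext N β τ r| ≤ CM N β R * R := by
    rw [abs_of_nonneg (Gext_nonneg hN hb1 hb2 hτ.1.le hτ.2 hrR)]
    calc Gext N β τ r ≤ CM N β R * (r - τ) := Gext_le hN hb1 hb2 hτ.1.le hτ.2 hrR
      _ ≤ CM N β R * R := by
          apply mul_le_mul_of_nonneg_left ?_ (CM_nonneg hb1 hb2)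
          linarith [hτ.1]
  calc ‖Gext N β τ r * ψ τ‖ = |Gext N β τ r| * |ψ τ| := abs_mul _ _
    _ ≤ CM N β R * R * B :=
        mul_le_mul h1 (hψb τ) (abs_nonneg _) (mul_nonneg (CM_nonneg hb1 hb2) h0R)

section Op

variable {c₂ c₄ x y B : ℝ}

lemma rpow_lip (hc₄ : 0 < c₄) (hx : c₄ ≤ x) (hy : c₄ ≤ y) :
    |x ^ (-(1/3) : ℝ) - y ^ (-(1/3) : ℝ)| ≤ (1/3 * c₄ ^ (-(4/3) : ℝ)) * |x - y| := by
  have key := Convex.norm_image_sub_le_of_norm_hasDerivWithin_le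
    (f := fun t : ℝ => t ^ (-(1/3) : ℝ))
    (f' := fun t : ℝ => (-(1/3) : ℝ) * t ^ ((-(1/3) : ℝ) - 1)) (s := Ici c₄)
    (C := 1/3 * c₄ ^ (-(4/3) : ℝ)) ?hd ?hb (convex_Ici c₄) hy hx
  · simpa [Real.norm_eq_abs] using key
  case hd =>
    intro t ht
    exact (Real.hasDerivAt_rpow_const (Or.inl (ne_of_gt (hc₄.trans_le ht)))).hasDerivWithinAt
  case hb =>
    intro t ht
    have htpos : 0 < t := hc₄.trans_le ht
    have he : ((-(1/3) : ℝ) - 1) = (-(4/3) : ℝ) := by norm_num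
    rw [Real.norm_eq_abs, he, abs_mul, abs_of_nonneg (Real.rpow_nonneg htpos.le _)]
    have : |(-(1/3) : ℝ)| = 1/3 := by norm_num
    rw [this]
    exact mul_le_mul_of_nonneg_left
      (Real.rpow_le_rpow_of_nonpos hc₄ ht (by norm_num)) (by norm_num)

noncomputable def wfun (R c₄ : ℝ) (hR : 0 ≤ R) (φ : C(Set.Icc (0:ℝ) R, ℝ)) : ℝ → ℝ :=
  fun t => (max (φ (projIcc 0 R hR t)) c₄) ^ (-(1/3) : ℝ)

variable {hR : 0 ≤ R} {φ φ₁ φ₂ : C(Set.Icc (0:ℝ) R, ℝ)}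

lemma w_cont (hc₄ : 0 < c₄) : Continuous (wfun R c₄ hR φ) := by
  apply Continuous.rpow_const
  · exact (φ.continuous.comp continuous_projIcc).max continuous_const
  · intro t
    exact Or.inl (ne_of_gt (lt_of_lt_of_le hc₄ (le_max_right _ _)))

lemma w_pos (hc₄ : 0 < c₄) (t : ℝ) : 0 < wfun R c₄ hR φ t :=
  Real.rpow_pos_of_pos (lt_of_lt_of_le hc₄ (le_max_right _ _)) _

lemma w_abs_le (hc₄ : 0 < c₄) (t : ℝ) : |wfun R c₄ hR φ t| ≤ c₄ ^ (-(1/3) : ℝ) := by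
  rw [abs_of_pos (w_pos hc₄ t)]
  exact Real.rpow_le_rpow_of_nonpos hc₄ (le_max_right _ _) (by norm_num)

lemma w_lip (hc₄ : 0 < c₄) (t : ℝ) :
    |wfun R c₄ hR φ₁ t - wfun R c₄ hR φ₂ t|
      ≤ (1/3 * c₄ ^ (-(4/3) : ℝ)) * |φ₁ (projIcc 0 R hR t) - φ₂ (projIcc 0 R hR t)| := by
  refine le_trans (rpow_lip hc₄ (le_max_right _ _) (le_max_right _ _)) ?_
  apply mul_le_mul_of_nonneg_left (abs_max_sub_max_le_abs _ _ _)
  positivity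

lemma int_diff_bound {ψ : ℝ → ℝ} (hN : 2 ≤ N) (hb1 : 0 ≤ -β)
    (hb2 : 0 ≤ (4 * ((N : ℝ) - 1) * β + 1) / 4)
    (hψc : Continuous ψ) (hψb : ∀ t, |ψ t| ≤ B)
    (hx : x ∈ Set.Icc (0:ℝ) R) (hy : y ∈ Set.Icc (0:ℝ) R) (hxy : x ≤ y) :
    |(∫ τ in (0:ℝ)..y, Gext N β τ y * ψ τ) - ∫ τ in (0:ℝ)..x, Gext N β τ x * ψ τ|
      ≤ 2 * (CM N β R * R * B) * (y - x) := by
  have hB : 0 ≤ B := (abs_nonneg _).trans (hψb 0)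
  have hCM : 0 ≤ CM N β R := CM_nonneg hb1 hb2
  have h0R : (0:ℝ) ≤ R := hx.1.trans (hx.2)
  have Iy : IntervalIntegrable (fun τ => Gext N β τ y * ψ τ) MeasureTheory.volume 0 y :=
    K_int hN hb1 hb2 hψc hψb hy.1 hy.2
  have hsub1 : Set.uIcc (0:ℝ) x ⊆ Set.uIcc (0:ℝ) y := by
    rw [uIcc_of_le hx.1, uIcc_of_le hy.1]
    exact Icc_subset_Icc le_rfl hxy
  have hsub2 : Set.uIcc x y ⊆ Set.uIcc (0:ℝ) y := by
    rw [uIcc_of_le hxy, uIcc_of_le hy.1]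
    exact Icc_subset_Icc hx.1 le_rfl
  have Iyx : IntervalIntegrable (fun τ => Gext N β τ y * ψ τ) MeasureTheory.volume 0 x :=
    Iy.mono_set hsub1
  have Ixy : IntervalIntegrable (fun τ => Gext N β τ y * ψ τ) MeasureTheory.volume x y :=
    Iy.mono_set hsub2
  have Ix : IntervalIntegrable (fun τ => Gext N β τ x * ψ τ) MeasureTheory.volume 0 x :=
    K_int hN hb1 hb2 hψc hψb hx.1 hx.2
  have split : (∫ τ in (0:ℝ)..y, Gext N β τ y * ψ τ)
      = (∫ τ in (0:ℝ)..x, Gext N β τ y * ψ τ) + ∫ τ in x..y, Gext N β τ y * ψ τ :=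
    (integral_add_adjacent_intervals Iyx Ixy).symm
  have diff : (∫ τ in (0:ℝ)..x, Gext N β τ y * ψ τ) - (∫ τ in (0:ℝ)..x, Gext N β τ x * ψ τ)
      = ∫ τ in (0:ℝ)..x, (Gext N β τ y - Gext N β τ x) * ψ τ := by
    rw [← integral_sub Iyx Ix]
    congr 1
    funext τ
    ring
  have b1 : |∫ τ in (0:ℝ)..x, (Gext N β τ y - Gext N β τ x) * ψ τ|
      ≤ CM N β R * (y - x) * B * |x - 0| := by
    have := intervalIntegral.norm_integral_le_of_norm_le_const
      (C := CM N β R * (y - x) * B)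
      (f := fun τ => (Gext N β τ y - Gext N β τ x) * ψ τ) (a := (0:ℝ)) (b := x) ?_
    · simpa [Real.norm_eq_abs] using this
    intro τ hτ
    rw [uIoc_of_le hx.1] at hτ
    rw [Real.norm_eq_abs, abs_mul]
    have h1 : |Gext N β τ y - Gext N β τ x| ≤ CM N β R * (y - x) :=
      Gext_diff_abs hN hb1 hb2 hτ.1.le hτ.2 hxy hy.2
    exact mul_le_mul h1 (hψb τ) (abs_nonneg _) (mul_nonneg hCM (by linarith))
  have b2 : |∫ τ in x..y, Gext N β τ y * ψ τ| ≤ CM N β R * R * B * |y - x| := by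
    have := intervalIntegral.norm_integral_le_of_norm_le_const
      (C := CM N β R * R * B)
      (f := fun τ => Gext N β τ y * ψ τ) (a := x) (b := y) ?_
    · simpa [Real.norm_eq_abs] using this
    intro τ hτ
    rw [uIoc_of_le hxy] at hτ
    have hτ0 : 0 ≤ τ := hx.1.trans hτ.1.le
    rw [Real.norm_eq_abs, abs_mul]
    have h1 : |Gext N β τ y| ≤ CM N β R * R := by
      rw [abs_of_nonneg (Gext_nonneg hN hb1 hb2 hτ0 hτ.2 hy.2)]
      calc Gext N β τ y ≤ CM N β R * (y - τ) := Gext_le hN hb1 hb2 hτ0 hτ.2 hy.2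
        _ ≤ CM N β R * R := mul_le_mul_of_nonneg_left (by linarith [hy.2]) hCM
    exact mul_le_mul h1 (hψb τ) (abs_nonneg _) (mul_nonneg hCM h0R)
  have habs1 : |x - 0| = x := by rw [sub_zero, abs_of_nonneg hx.1]
  have habs2 : |y - x| = y - x := abs_of_nonneg (by linarith)
  calc |(∫ τ in (0:ℝ)..y, Gext N β τ y * ψ τ) - ∫ τ in (0:ℝ)..x, Gext N β τ x * ψ τ|
      = |(∫ τ in (0:ℝ)..x, (Gext N β τ y - Gext N β τ x) * ψ τ)
          + ∫ τ in x..y, Gext N β τ y * ψ τ| := by rw [split, ← diff]; ring_nf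
    _ ≤ |∫ τ in (0:ℝ)..x, (Gext N β τ y - Gext N β τ x) * ψ τ|
          + |∫ τ in x..y, Gext N β τ y * ψ τ| := abs_add_le _ _
    _ ≤ CM N β R * (y - x) * B * x + CM N β R * R * B * (y - x) := by
        rw [habs1] at b1
        rw [habs2] at b2
        exact add_le_add b1 b2
    _ ≤ 2 * (CM N β R * R * B) * (y - x) := by nlinarith [hx.2, hx.1, mul_nonneg (mul_nonneg hCM hB) (sub_nonneg.2 hxy)]

noncomputable def Tval (N : ℕ) (β c₂ c₄ R : ℝ) (hR : 0 ≤ R)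
    (φ : C(Set.Icc (0:ℝ) R, ℝ)) (x : ℝ) : ℝ :=
  c₄ + c₂ * x ^ 2 + ∫ τ in (0:ℝ)..x, Gext N β τ x * wfun R c₄ hR φ τ

lemma Tval_lip (hN : 2 ≤ N) (hb1 : 0 ≤ -β)
    (hb2 : 0 ≤ (4 * ((N : ℝ) - 1) * β + 1) / 4) (hc₂ : 0 ≤ c₂) (hc₄ : 0 < c₄)
    (hx : x ∈ Set.Icc (0:ℝ) R) (hy : y ∈ Set.Icc (0:ℝ) R) :
    |Tval N β c₂ c₄ R hR φ y - Tval N β c₂ c₄ R hR φ x|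
      ≤ (2 * c₂ * R + 2 * (CM N β R * R * c₄ ^ (-(1/3) : ℝ))) * |y - x| := by
  have key : ∀ a b : ℝ, a ∈ Set.Icc (0:ℝ) R → b ∈ Set.Icc (0:ℝ) R → a ≤ b →
      |Tval N β c₂ c₄ R hR φ b - Tval N β c₂ c₄ R hR φ a|
        ≤ (2 * c₂ * R + 2 * (CM N β R * R * c₄ ^ (-(1/3) : ℝ))) * |b - a| := by
    intro a b ha hb hab
    have hint := int_diff_bound (B := c₄ ^ (-(1/3) : ℝ)) hN hb1 hb2
      (w_cont (hR := hR) (φ := φ) hc₄) (w_abs_le (hR := hR) (φ := φ) hc₄) ha hb hab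
    have hsq : |c₂ * b ^ 2 - c₂ * a ^ 2| ≤ 2 * c₂ * R * (b - a) := by
      have h1 : (0:ℝ) ≤ c₂ * b ^ 2 - c₂ * a ^ 2 := by
        nlinarith [mul_nonneg hc₂ (mul_nonneg (add_nonneg ha.1 (ha.1.trans hab))
          (sub_nonneg.2 hab))]
      rw [abs_of_nonneg h1]
      nlinarith [mul_nonneg (mul_nonneg hc₂ (sub_nonneg.2 hab))
        (by linarith [ha.2, hb.2] : (0:ℝ) ≤ 2 * R - a - b)]
    have habs : |b - a| = b - a := abs_of_nonneg (by linarith)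
    rw [habs]
    have expand : Tval N β c₂ c₄ R hR φ b - Tval N β c₂ c₄ R hR φ a
        = (c₂ * b ^ 2 - c₂ * a ^ 2)
          + ((∫ τ in (0:ℝ)..b, Gext N β τ b * wfun R c₄ hR φ τ)
            - ∫ τ in (0:ℝ)..a, Gext N β τ a * wfun R c₄ hR φ τ) := by
      rw [Tval, Tval]; ring
    calc |Tval N β c₂ c₄ R hR φ b - Tval N β c₂ c₄ R hR φ a|
        ≤ |c₂ * b ^ 2 - c₂ * a ^ 2|
          + |(∫ τ in (0:ℝ)..b, Gext N β τ b * wfun R c₄ hR φ τ)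
            - ∫ τ in (0:ℝ)..a, Gext N β τ a * wfun R c₄ hR φ τ| := by
          rw [expand]; exact abs_add_le _ _
      _ ≤ 2 * c₂ * R * (b - a) + 2 * (CM N β R * R * c₄ ^ (-(1/3) : ℝ)) * (b - a) :=
          add_le_add hsq hint
      _ = (2 * c₂ * R + 2 * (CM N β R * R * c₄ ^ (-(1/3) : ℝ))) * (b - a) := by ring
  rcases le_total x y with h | h
  · exact key x y hx hy h
  · rw [abs_sub_comm, abs_sub_comm y x]
    exact key y x hy hx h

noncomputable def Tmap (N : ℕ) (β c₂ c₄ R : ℝ) (hR : 0 ≤ R) (hN : 2 ≤ N)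
    (hb1 : 0 ≤ -β) (hb2 : 0 ≤ (4 * ((N : ℝ) - 1) * β + 1) / 4)
    (hc₂ : 0 ≤ c₂) (hc₄ : 0 < c₄)
    (φ : C(Set.Icc (0:ℝ) R, ℝ)) : C(Set.Icc (0:ℝ) R, ℝ) :=
  ContinuousMap.mk (fun x => Tval N β c₂ c₄ R hR φ (x : ℝ)) (by
    have hlip : LipschitzWith
        (Real.toNNReal (2 * c₂ * R + 2 * (CM N β R * R * c₄ ^ (-(1/3) : ℝ))))
        (fun x : Set.Icc (0:ℝ) R => Tval N β c₂ c₄ R hR φ (x : ℝ)) := by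
      apply LipschitzWith.of_dist_le_mul
      intro a b
      rw [Subtype.dist_eq, Real.dist_eq, Real.dist_eq]
      refine le_trans (Tval_lip hN hb1 hb2 hc₂ hc₄ b.2 a.2) ?_
      apply mul_le_mul_of_nonneg_right (Real.le_coe_toNNReal _) (abs_nonneg _)
    exact hlip.continuous)

lemma Tmap_apply {hR : 0 ≤ R} {hN : 2 ≤ N} {hb1 : 0 ≤ -β}
    {hb2 : 0 ≤ (4 * ((N : ℝ) - 1) * β + 1) / 4} {hc₂ : 0 ≤ c₂} {hc₄ : 0 < c₄}
    (φ : C(Set.Icc (0:ℝ) R, ℝ)) (x : Set.Icc (0:ℝ) R) :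
    Tmap N β c₂ c₄ R hR hN hb1 hb2 hc₂ hc₄ φ x
      = c₄ + c₂ * (x : ℝ) ^ 2
        + ∫ τ in (0:ℝ)..(x : ℝ), Gext N β τ x * wfun R c₄ hR φ τ := rfl

end Op

end S13

open Set S13

/-- Claim 3.1 of the paper: for `N ≥ 2`, `−1/(4(N−1)) ≤ β ≤ 0`,
`c₂, c₄ > 0` and `R > 0`, the integral equation
`h(r) = c₄ + c₂ r² + ∫_0^r G(τ,r) h(τ)^{−1/3} dτ` has a continuous solution `h`
on `[0,R]` with `h(r) ≥ c₄ + c₂ r²` there. -/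
theorem stmt_13 (N : ℕ) (hN : 2 ≤ N) (β : ℝ)
    (hβ₁ : -(1 / (4 * ((N : ℝ) - 1))) ≤ β) (hβ₂ : β ≤ 0)
    (c₂ c₄ R : ℝ) (hc₂ : 0 < c₂) (hc₄ : 0 < c₄) (hR : 0 < R) :
    ∃ h : ℝ → ℝ, Continuous h ∧
      (∀ r ∈ Set.Icc (0 : ℝ) R, c₄ + c₂ * r ^ 2 ≤ h r) ∧
      (∀ r ∈ Set.Icc (0 : ℝ) R,
        h r = c₄ + c₂ * r ^ 2
          + ∫ τ in (0 : ℝ)..r, Gext N β τ r * h τ ^ (-(1 / 3) : ℝ)) := by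
  classical
  have hb1 : 0 ≤ -β := neg_nonneg.2 hβ₂
  have hN1 : (0:ℝ) < (N:ℝ) - 1 := by
    have h2 : (2:ℝ) ≤ (N:ℝ) := by exact_mod_cast hN
    linarith
  have hb2 : 0 ≤ (4 * ((N : ℝ) - 1) * β + 1) / 4 := by
    have h := mul_le_mul_of_nonneg_left hβ₁ (by positivity : (0:ℝ) ≤ 4 * ((N:ℝ) - 1))
    have he : 4 * ((N:ℝ) - 1) * -(1 / (4 * ((N:ℝ) - 1))) = -1 := by
      field_simp
    rw [he] at h
    linarith
  have hR0 : (0:ℝ) ≤ R := hR.le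
  set L : ℝ := 1/3 * c₄ ^ (-(4/3) : ℝ) with hLdef
  have hL0 : 0 ≤ L := by positivity
  set Bw : ℝ := c₄ ^ (-(1/3) : ℝ) with hBwdef
  have hBw0 : 0 ≤ Bw := by positivity
  set MK : ℝ := CM N β R * R with hMKdef
  have hMK0 : 0 ≤ MK := mul_nonneg (CM_nonneg hb1 hb2) hR0
  set A : ℝ := MK * L with hAdef
  have hA0 : 0 ≤ A := mul_nonneg hMK0 hL0
  haveI : Nonempty (Set.Icc (0:ℝ) R) := ⟨⟨0, le_refl 0, hR0⟩⟩
  set T : C(Set.Icc (0:ℝ) R, ℝ) → C(Set.Icc (0:ℝ) R, ℝ) :=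
    Tmap N β c₂ c₄ R hR0 hN hb1 hb2 hc₂.le hc₄ with hTdef
  -- The Volterra iterate estimate.
  have key : ∀ n : ℕ, ∀ φ₁ φ₂ : C(Set.Icc (0:ℝ) R, ℝ), ∀ x : Set.Icc (0:ℝ) R,
      |(T^[n] φ₁) x - (T^[n] φ₂) x|
        ≤ dist φ₁ φ₂ * A ^ n * (x:ℝ) ^ n / (n.factorial : ℝ) := by
    intro n
    induction n with
    | zero =>
      intro φ₁ φ₂ x
      simp only [Function.iterate_zero, id_eq, pow_zero, Nat.factorial_zero, Nat.cast_one,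
        mul_one, div_one]
      rw [← Real.dist_eq]
      exact ContinuousMap.dist_apply_le_dist x
    | succ n ih =>
      intro φ₁ φ₂ x
      rw [Function.iterate_succ_apply', Function.iterate_succ_apply']
      set ψ₁ := T^[n] φ₁ with hψ₁
      set ψ₂ := T^[n] φ₂ with hψ₂
      set d := dist φ₁ φ₂ with hd
      have hd0 : 0 ≤ d := dist_nonneg
      have hx0 : (0:ℝ) ≤ (x:ℝ) := x.2.1
      have hxR : (x:ℝ) ≤ R := x.2.2
      have hint1 : IntervalIntegrable
          (fun τ => Gext N β τ (x:ℝ) * wfun R c₄ hR0 ψ₁ τ) MeasureTheory.volume 0 (x:ℝ) :=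
        K_int hN hb1 hb2 (w_cont hc₄) (w_abs_le hc₄) hx0 hxR
      have hint2 : IntervalIntegrable
          (fun τ => Gext N β τ (x:ℝ) * wfun R c₄ hR0 ψ₂ τ) MeasureTheory.volume 0 (x:ℝ) :=
        K_int hN hb1 hb2 (w_cont hc₄) (w_abs_le hc₄) hx0 hxR
      have esub : (∫ τ in (0:ℝ)..(x:ℝ), Gext N β τ (x:ℝ) * wfun R c₄ hR0 ψ₁ τ)
            - (∫ τ in (0:ℝ)..(x:ℝ), Gext N β τ (x:ℝ) * wfun R c₄ hR0 ψ₂ τ)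
          = ∫ τ in (0:ℝ)..(x:ℝ),
              Gext N β τ (x:ℝ) * (wfun R c₄ hR0 ψ₁ τ - wfun R c₄ hR0 ψ₂ τ) := by
        rw [← integral_sub hint1 hint2]
        congr 1
        funext τ
        ring
      have ediff : (T ψ₁) x - (T ψ₂) x = ∫ τ in (0:ℝ)..(x:ℝ),
          Gext N β τ (x:ℝ) * (wfun R c₄ hR0 ψ₁ τ - wfun R c₄ hR0 ψ₂ τ) := by
        rw [hTdef, Tmap_apply, Tmap_apply, ← esub]
        ring
      rw [ediff]
      set C0 : ℝ := MK * L * (d * A ^ n / (n.factorial : ℝ)) with hC0def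
      have hC00 : 0 ≤ C0 := by positivity
      have hbound : ∀ᵐ t ∂(MeasureTheory.volume.restrict (Set.uIoc (0:ℝ) (x:ℝ))),
          ‖Gext N β t (x:ℝ) * (wfun R c₄ hR0 ψ₁ t - wfun R c₄ hR0 ψ₂ t)‖ ≤ C0 * t ^ n := by
        filter_upwards [MeasureTheory.ae_restrict_mem measurableSet_uIoc] with t ht
        rw [Set.uIoc_of_le hx0] at ht
        have htmem : t ∈ Set.Icc (0:ℝ) R := ⟨ht.1.le, ht.2.trans hxR⟩
        have hproj : projIcc 0 R hR0 t = ⟨t, htmem⟩ := projIcc_of_mem hR0 htmem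
        have hG : |Gext N β t (x:ℝ)| ≤ MK := by
          rw [abs_of_nonneg (Gext_nonneg hN hb1 hb2 ht.1.le ht.2 hxR)]
          calc Gext N β t (x:ℝ) ≤ CM N β R * ((x:ℝ) - t) :=
                Gext_le hN hb1 hb2 ht.1.le ht.2 hxR
            _ ≤ MK := by
                rw [hMKdef]
                exact mul_le_mul_of_nonneg_left (by linarith [ht.1]) (CM_nonneg hb1 hb2)
        have hw : |wfun R c₄ hR0 ψ₁ t - wfun R c₄ hR0 ψ₂ t|
            ≤ L * (d * A ^ n * t ^ n / (n.factorial : ℝ)) := by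
          refine le_trans (w_lip hc₄ t) ?_
          rw [hproj]
          exact mul_le_mul_of_nonneg_left (ih φ₁ φ₂ ⟨t, htmem⟩) hL0
        calc ‖Gext N β t (x:ℝ) * (wfun R c₄ hR0 ψ₁ t - wfun R c₄ hR0 ψ₂ t)‖
            = |Gext N β t (x:ℝ)| * |wfun R c₄ hR0 ψ₁ t - wfun R c₄ hR0 ψ₂ t| := abs_mul _ _
          _ ≤ MK * (L * (d * A ^ n * t ^ n / (n.factorial : ℝ))) :=
              mul_le_mul hG hw (abs_nonneg _) hMK0
          _ = C0 * t ^ n := by rw [hC0def]; ring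
      have hgint : IntervalIntegrable (fun t => C0 * t ^ n) MeasureTheory.volume 0 (x:ℝ) :=
        (Continuous.intervalIntegrable (by fun_prop) _ _)
      have hb' := (MeasureTheory.ae_restrict_iff' measurableSet_uIoc).1 hbound
      rw [Set.uIoc_of_le hx0] at hb'
      have hnorm : ‖∫ τ in (0:ℝ)..(x:ℝ),
            Gext N β τ (x:ℝ) * (wfun R c₄ hR0 ψ₁ τ - wfun R c₄ hR0 ψ₂ τ)‖
          ≤ |∫ t in (0:ℝ)..(x:ℝ), C0 * t ^ n| :=
        (intervalIntegral.norm_integral_le_of_norm_le hx0 hb' hgint).trans (le_abs_self _)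
      have hval : (∫ t in (0:ℝ)..(x:ℝ), C0 * t ^ n) = C0 * ((x:ℝ) ^ (n+1) / (n+1)) := by
        rw [intervalIntegral.integral_const_mul, integral_pow]
        norm_num
      rw [Real.norm_eq_abs] at hnorm
      calc |∫ τ in (0:ℝ)..(x:ℝ),
            Gext N β τ (x:ℝ) * (wfun R c₄ hR0 ψ₁ τ - wfun R c₄ hR0 ψ₂ τ)|
          ≤ |∫ t in (0:ℝ)..(x:ℝ), C0 * t ^ n| := hnorm
        _ = C0 * ((x:ℝ) ^ (n+1) / (n+1)) := by
            rw [hval, abs_of_nonneg (by positivity)]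
        _ = d * A ^ (n+1) * (x:ℝ) ^ (n+1) / ((n+1).factorial : ℝ) := by
            rw [hC0def, hAdef, Nat.factorial_succ]
            have hfac : ((n.factorial : ℝ)) ≠ 0 := by
              exact_mod_cast Nat.factorial_pos n |>.ne'
            have hn1 : ((n:ℝ) + 1) ≠ 0 := by positivity
            push_cast
            field_simp
            ring
  -- a contracting iterate
  obtain ⟨n₀, hn₀⟩ : ∃ n : ℕ, (A * R) ^ n / (n.factorial : ℝ) < 1 := by
    have ht := FloorSemiring.tendsto_pow_div_factorial_atTop (K := ℝ) (A * R)
    exact (ht.eventually (gt_mem_nhds one_pos)).exists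
  have hq0 : 0 ≤ (A*R) ^ n₀ / (n₀.factorial : ℝ) := by positivity
  set Kc : NNReal := Real.toNNReal ((A*R) ^ n₀ / (n₀.factorial : ℝ)) with hKcdef
  have hKcoe : (Kc : ℝ) = (A*R) ^ n₀ / (n₀.factorial : ℝ) := Real.coe_toNNReal _ hq0
  have hKc1 : Kc < 1 := by
    rw [← NNReal.coe_lt_coe, hKcoe, NNReal.coe_one]
    exact hn₀
  have hlip : LipschitzWith Kc (T^[n₀]) := by
    apply LipschitzWith.of_dist_le_mul
    intro φ₁ φ₂
    refine (ContinuousMap.dist_le (mul_nonneg Kc.2 dist_nonneg)).2 fun x => ?_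
    rw [Real.dist_eq]
    refine le_trans (key n₀ φ₁ φ₂ x) ?_
    have hxpow : (x:ℝ) ^ n₀ ≤ R ^ n₀ := pow_le_pow_left₀ x.2.1 x.2.2 _
    calc dist φ₁ φ₂ * A ^ n₀ * (x:ℝ) ^ n₀ / (n₀.factorial : ℝ)
        ≤ dist φ₁ φ₂ * A ^ n₀ * R ^ n₀ / (n₀.factorial : ℝ) := by
          apply div_le_div_of_nonneg_right ?_ (Nat.cast_nonneg _)
          exact mul_le_mul_of_nonneg_left hxpow (by positivity)
      _ = (Kc : ℝ) * dist φ₁ φ₂ := by rw [hKcoe, mul_pow]; ring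
  have hcontr : ContractingWith Kc (T^[n₀]) := ⟨hKc1, hlip⟩
  set φs : C(Set.Icc (0:ℝ) R, ℝ) := hcontr.fixedPoint (T^[n₀]) with hφsdef
  have hfix : Function.IsFixedPt T φs := hcontr.isFixedPt_fixedPoint_iterate
  -- lower bound for the fixed point
  have hlow : ∀ x : Set.Icc (0:ℝ) R, c₄ + c₂ * (x:ℝ) ^ 2 ≤ φs x := by
    intro x
    conv_rhs => rw [← hfix]
    rw [hTdef, Tmap_apply]
    have hpos : 0 ≤ ∫ τ in (0:ℝ)..(x:ℝ), Gext N β τ (x:ℝ) * wfun R c₄ hR0 φs τ := by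
      apply integral_nonneg x.2.1
      intro τ hτ
      exact mul_nonneg (Gext_nonneg hN hb1 hb2 hτ.1 hτ.2 x.2.2) (w_pos hc₄ τ).le
    linarith
  -- the solution
  refine ⟨fun t => φs (projIcc 0 R hR0 t), (map_continuous φs).comp continuous_projIcc, ?_, ?_⟩
  · intro r hr
    show c₄ + c₂ * r ^ 2 ≤ φs (projIcc 0 R hR0 r)
    rw [projIcc_of_mem hR0 hr]
    exact hlow ⟨r, hr⟩
  · intro r hr
    have hw : wfun R c₄ hR0 φs = fun t => φs (projIcc 0 R hR0 t) ^ (-(1/3) : ℝ) := by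
      funext t
      show (max (φs (projIcc 0 R hR0 t)) c₄) ^ (-(1/3) : ℝ) = _
      congr 1
      apply max_eq_left
      have h1 := hlow (projIcc 0 R hR0 t)
      have h2 : 0 ≤ c₂ * ((projIcc 0 R hR0 t : ℝ)) ^ 2 := by positivity
      linarith
    show φs (projIcc 0 R hR0 r) = c₄ + c₂ * r ^ 2
      + ∫ τ in (0:ℝ)..r, Gext N β τ r * φs (projIcc 0 R hR0 τ) ^ (-(1/3) : ℝ)
    rw [projIcc_of_mem hR0 hr]
    have heq : T φs (⟨r, hr⟩ : Set.Icc (0:ℝ) R) = φs ⟨r, hr⟩ := by rw [hfix]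
    rw [← heq, hTdef, Tmap_apply, hw]
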